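/- Let G be a graph, M ⊆ V(G) a feedback vertex set, X ⊆ M, and T₁, T₂ two vertex-disjoint connected subsets of V(G) − M each containing a neighbor of every vertex of X. If S is a feedback vertex set of G with S ∩ T₁ = ∅ and S ∩ T₂ = ∅, then |X \ S| ≤ 1. -/

import Mathlib

open SimpleGraph Finset

/-- `S` is a feedback vertex set of `G`: removing `S` leaves an acyclic graph. -/
def IsFVS {V : Type*} (G : SimpleGraph V) (S : Set V) : Prop :=
  (G.induce Sᶜ).IsAcyclic

/-- If `M` is a feedback vertex set, `X ⊆ M`, and `T₁, T₂` are disjoint connected subsets of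
`V(G) - M` each containing a neighbor of every vertex of `X`, then any feedback vertex set `S`
avoiding both `T₁` and `T₂` satisfies `|X \ S| ≤ 1`. -/

lemma liftWalk {V : Type*} {G : SimpleGraph V} {s : Set V} :
    ∀ {a b : V} (p : G.Walk a b) (hp : ∀ v ∈ p.support, v ∈ s),
    ∃ q : (G.induce s).Walk ⟨a, hp a p.start_mem_support⟩ ⟨b, hp b p.end_mem_support⟩,
      q.map (SimpleGraph.Embedding.induce s).toHom = p := by
  intro a b p
  induction p with
  | nil => intro hp; exact ⟨SimpleGraph.Walk.nil, rfl⟩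
  | cons h p ih =>
    intro hp
    have hp' : ∀ v ∈ p.support, v ∈ s := fun v hv => hp v (by simp [hv])
    obtain ⟨q, hq⟩ := ih hp'
    refine ⟨SimpleGraph.Walk.cons (by exact h) q, ?_⟩
    show SimpleGraph.Walk.cons _ (q.map (SimpleGraph.Embedding.induce s).toHom) = _
    rw [hq]
    rfl

lemma buildWalk {V : Type*} [DecidableEq V] {G : SimpleGraph V} {T : Finset V}
    (hc : (G.induce (T : Set V)).Connected) {x y : V}
    (hv : ∃ v ∈ T, G.Adj x v) (hw : ∃ v ∈ T, G.Adj y v) :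
    ∃ W : G.Walk x y, (∀ u ∈ W.support, u = x ∨ u = y ∨ u ∈ T) ∧
      (∀ e ∈ W.edges, ∃ u ∈ T, u ∈ e) := by
  obtain ⟨v, hvT, hxv⟩ := hv
  obtain ⟨w, hwT, hyw⟩ := hw
  obtain ⟨r₀⟩ := hc.preconnected ⟨v, by simpa using hvT⟩ ⟨w, by simpa using hwT⟩
  set r : G.Walk v w := r₀.map (SimpleGraph.Embedding.induce (T : Set V)).toHom with hr
  have hsupp : ∀ u ∈ r.support, u ∈ T := by
    intro u hu
    rw [hr] at hu
    replace hu : u ∈ (r₀.map (SimpleGraph.Embedding.induce (T : Set V)).toHom).support := hu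
    rw [SimpleGraph.Walk.support_map] at hu
    obtain ⟨⟨u', hu'⟩, _, rfl⟩ := List.mem_map.mp hu
    simpa using hu'
  refine ⟨SimpleGraph.Walk.cons hxv (r.concat hyw.symm), ?_, ?_⟩
  · intro u hu
    rw [SimpleGraph.Walk.support_cons, SimpleGraph.Walk.support_concat] at hu
    simp only [List.mem_cons, List.mem_append, List.mem_singleton, List.not_mem_nil, or_false] at hu
    rcases hu with rfl | hu | rfl
    · exact Or.inl rfl
    · exact Or.inr (Or.inr (hsupp u hu))
    · exact Or.inr (Or.inl rfl)
  · intro e he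
    rw [SimpleGraph.Walk.edges_cons, SimpleGraph.Walk.edges_concat,
      List.concat_eq_append] at he
    simp only [List.mem_cons, List.mem_append, List.mem_singleton, List.not_mem_nil, or_false] at he
    rcases he with rfl | he | rfl
    · exact ⟨v, hvT, by simp⟩
    · revert he
      induction e using Sym2.ind with
      | _ a b =>
        intro he
        exact ⟨a, hsupp a (SimpleGraph.Walk.fst_mem_support_of_mem_edges r he), by simp⟩
    · exact ⟨w, hwT, by simp⟩

theorem stmt4 {V : Type*} [DecidableEq V] (G : SimpleGraph V)
    (M : Finset V) (hM : IsFVS G ↑M)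
    (X : Finset V) (hX : X ⊆ M)
    (T₁ T₂ : Finset V) (hT₁M : Disjoint T₁ M) (hT₂M : Disjoint T₂ M)
    (hdisj : Disjoint T₁ T₂)
    (hc₁ : (G.induce (T₁ : Set V)).Connected) (hc₂ : (G.induce (T₂ : Set V)).Connected)
    (hn₁ : ∀ x ∈ X, ∃ v ∈ T₁, G.Adj x v) (hn₂ : ∀ x ∈ X, ∃ v ∈ T₂, G.Adj x v)
    (S : Finset V) (hS : IsFVS G ↑S) (h1 : S ∩ T₁ = ∅) (h2 : S ∩ T₂ = ∅) :
    (X \ S).card ≤ 1 := by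
  by_contra hcard
  push_neg at hcard
  obtain ⟨x, hx, y, hy, hxy⟩ := Finset.one_lt_card.mp hcard
  rw [Finset.mem_sdiff] at hx hy
  obtain ⟨hxX, hxS⟩ := hx
  obtain ⟨hyX, hyS⟩ := hy
  have hxM := hX hxX
  have hyM := hX hyX
  have hST₁ : ∀ u ∈ T₁, u ∉ S := fun u hu hus =>
    (Finset.eq_empty_iff_forall_notMem.mp h1 u) (Finset.mem_inter.mpr ⟨hus, hu⟩)
  have hST₂ : ∀ u ∈ T₂, u ∉ S := fun u hu hus =>
    (Finset.eq_empty_iff_forall_notMem.mp h2 u) (Finset.mem_inter.mpr ⟨hus, hu⟩)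
  obtain ⟨W₁, hW₁s, hW₁e⟩ := buildWalk hc₁ (hn₁ x hxX) (hn₁ y hyX)
  obtain ⟨W₂, hW₂s, hW₂e⟩ := buildWalk hc₂ (hn₂ x hxX) (hn₂ y hyX)
  have hs₁ : ∀ u ∈ W₁.support, u ∈ (↑S : Set V)ᶜ := by
    intro u hu
    rcases hW₁s u hu with rfl | rfl | h
    · simpa using hxS
    · simpa using hyS
    · simpa using hST₁ u h
  have hs₂ : ∀ u ∈ W₂.support, u ∈ (↑S : Set V)ᶜ := by
    intro u hu
    rcases hW₂s u hu with rfl | rfl | h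
    · simpa using hxS
    · simpa using hyS
    · simpa using hST₂ u h
  obtain ⟨q₁, hq₁⟩ := liftWalk W₁ hs₁
  obtain ⟨q₂, hq₂⟩ := liftWalk W₂ hs₂
  have hpq : q₁.toPath = q₂.toPath := isAcyclic_iff_path_unique.mp hS _ _
  have hempty : q₁.toPath.1.edges = [] := by
    by_contra hne
    obtain ⟨e, he⟩ := List.exists_mem_of_ne_nil _ hne
    have he₁ : Sym2.map (fun (u : ((↑S : Set V)ᶜ : Set V)) => (u : V)) e ∈ W₁.edges := by
      rw [← hq₁]
      show _ ∈ (q₁.map (SimpleGraph.Embedding.induce ((↑S : Set V)ᶜ)).toHom).edges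
      rw [SimpleGraph.Walk.edges_map]
      exact List.mem_map_of_mem (SimpleGraph.Walk.edges_bypass_subset _ he)
    have he₂ : Sym2.map (fun (u : ((↑S : Set V)ᶜ : Set V)) => (u : V)) e ∈ W₂.edges := by
      rw [← hq₂]
      show _ ∈ (q₂.map (SimpleGraph.Embedding.induce ((↑S : Set V)ᶜ)).toHom).edges
      rw [SimpleGraph.Walk.edges_map]
      refine List.mem_map_of_mem (SimpleGraph.Walk.edges_bypass_subset _ ?_)
      rw [show q₂.bypass = q₂.toPath.1 from rfl, ← hpq]
      exact he
    obtain ⟨u, huT₁, hue⟩ := hW₁e _ he₁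
    -- u is in the support of W₂
    have huW₂ : u ∈ W₂.support := by
      revert he₂ hue
      induction (Sym2.map (fun (u : ((↑S : Set V)ᶜ : Set V)) => (u : V)) e) using Sym2.ind with
      | _ a b =>
        intro he₂ hue
        rcases Sym2.mem_iff.mp hue with rfl | rfl
        · exact SimpleGraph.Walk.fst_mem_support_of_mem_edges W₂ he₂
        · exact SimpleGraph.Walk.snd_mem_support_of_mem_edges W₂ he₂
    rcases hW₂s u huW₂ with rfl | rfl | h
    · exact (Finset.disjoint_left.mp hT₁M huT₁) hxM
    · exact (Finset.disjoint_left.mp hT₁M huT₁) hyM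
    · exact (Finset.disjoint_left.mp hdisj huT₁) h
  have hlen : q₁.toPath.1.length = 0 := by
    rw [← SimpleGraph.Walk.length_edges, hempty]; rfl
  have := SimpleGraph.Walk.eq_of_length_eq_zero hlen
  exact hxy (congrArg Subtype.val this)
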